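/- Let $f : X \to Y$ be a continuous surjection of compact metric spaces with all fibers zero-dimensional (a light map at the level of fibers), where $X$ and $Y$ are finite dimensional. Fix $\delta > 0$ and $k = \dim Y$. Then the set $\mathcal{G}$ of continuous maps $g : X \to [0,1]$ with the property that every fiber of $(f,g) : X \to Y \times [0,1]$ contains at most $k+1$ points having pairwise distances at least $\delta$ is an open subset of $C(X,[0,1])$ with the sup metric. -/
import Mathlib


open Set Metric

def CovDimLE (X : Type*) [TopologicalSpace X] (n : ℕ) : Prop :=
  ∀ (ι : Type) (U : ι → Set X), (∀ i, IsOpen (U i)) → (⋃ i, U i) = Set.univ →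
    ∃ (κ : Type) (V : κ → Set X),
      (∀ j, IsOpen (V j)) ∧ (⋃ j, V j) = Set.univ ∧ (∀ j, ∃ i, V j ⊆ U i) ∧
      ∀ x : X, {j | x ∈ V j}.Finite ∧ {j | x ∈ V j}.ncard ≤ n + 1

theorem open_set_of_bounded_fibers {X Y : Type*} [MetricSpace X] [CompactSpace X]
    [MetricSpace Y] [CompactSpace Y] (f : C(X, Y)) (hsurj : Function.Surjective ⇑f)
    (hlight : ∀ y : Y, CovDimLE ↥(⇑f ⁻¹' {y}) 0)
    (m : ℕ) (hX : CovDimLE X m) (k : ℕ) (hY : CovDimLE Y k) (δ : ℝ) (hδ : 0 < δ) :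
    IsOpen {g : C(X, unitInterval) |
      ∀ (y : Y) (t : unitInterval) (S : Finset X),
        (↑S : Set X) ⊆ {x : X | f x = y ∧ g x = t} →
        (∀ x ∈ S, ∀ x' ∈ S, x ≠ x' → δ ≤ dist x x') → S.card ≤ k + 1} := by
  classical
  rw [Metric.isOpen_iff]
  intro g hg
  -- the compact set of (k+2)-tuples of δ-separated points in one fiber of f
  set T : Set (Fin (k + 2) → X) :=
    {x | (∀ i j, i ≠ j → δ ≤ dist (x i) (x j)) ∧ ∀ i j, f (x i) = f (x j)} with hT
  have hne : (Finset.univ : Finset (Fin (k + 2) × Fin (k + 2))).Nonempty :=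
    ⟨(0, 0), Finset.mem_univ _⟩
  set h : (Fin (k + 2) → X) → ℝ :=
    fun x => Finset.univ.sup' hne (fun p => dist (g (x p.1)) (g (x p.2))) with hh
  have hcont : Continuous h := by
    apply Continuous.finset_sup'_apply hne
    intro p _
    exact (g.continuous.comp (continuous_apply p.1)).dist
      (g.continuous.comp (continuous_apply p.2))
  have hTclosed : IsClosed T := by
    have heq : T = (⋂ i, ⋂ j, ⋂ (_ : i ≠ j), {x : Fin (k+2) → X | δ ≤ dist (x i) (x j)}) ∩
        (⋂ i, ⋂ j, {x : Fin (k+2) → X | f (x i) = f (x j)}) := by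
      ext x
      simp [hT, Set.mem_iInter]
    rw [heq]
    apply IsClosed.inter
    · refine isClosed_iInter fun i => isClosed_iInter fun j => isClosed_iInter fun _ => ?_
      exact isClosed_le continuous_const ((continuous_apply i).dist (continuous_apply j))
    · refine isClosed_iInter fun i => isClosed_iInter fun j => ?_
      exact isClosed_eq (f.continuous.comp (continuous_apply i))
        (f.continuous.comp (continuous_apply j))
  -- positivity of h on T
  have hpos : ∀ x ∈ T, 0 < h x := by
    intro x hx
    by_contra hle
    push_neg at hle
    have hxinj : Function.Injective x := by
      intro i j hij
      by_contra hne'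
      have := hx.1 i j hne'
      rw [hij, dist_self] at this
      linarith
    have hgeq : ∀ i, g (x i) = g (x 0) := by
      intro i
      have h1 : dist (g (x i)) (g (x 0)) ≤ h x :=
        Finset.le_sup' (f := fun p : Fin (k+2) × Fin (k+2) => dist (g (x p.1)) (g (x p.2)))
          (Finset.mem_univ (i, 0))
      have h2 : dist (g (x i)) (g (x 0)) = 0 := le_antisymm (h1.trans hle) dist_nonneg
      exact dist_eq_zero.mp h2
    have hcard : (Finset.univ.image x).card ≤ k + 1 := by
      apply hg (f (x 0)) (g (x 0))
      · intro z hz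
        simp only [Finset.coe_image, Finset.coe_univ, Set.image_univ] at hz
        obtain ⟨i, rfl⟩ := hz
        exact ⟨hx.2 i 0, hgeq i⟩
      · intro a ha b hb hab
        simp only [Finset.mem_image, Finset.mem_univ, true_and] at ha hb
        obtain ⟨i, rfl⟩ := ha
        obtain ⟨j, rfl⟩ := hb
        exact hx.1 i j (fun hij => hab (by rw [hij]))
    rw [Finset.card_image_of_injective _ hxinj, Finset.card_univ, Fintype.card_fin] at hcard
    omega
  -- uniform lower bound ε on T
  obtain ⟨ε, hε, hεT⟩ : ∃ ε > 0, ∀ x ∈ T, ε ≤ h x := by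
    rcases T.eq_empty_or_nonempty with hTe | hTne
    · exact ⟨1, one_pos, by simp [hTe]⟩
    · obtain ⟨x₀, hx₀T, hx₀min⟩ := hTclosed.isCompact.exists_isMinOn hTne hcont.continuousOn
      exact ⟨h x₀, hpos x₀ hx₀T, fun x hx => hx₀min hx⟩
  refine ⟨ε / 3, by positivity, ?_⟩
  intro g' hg' y t S hS hsep
  by_contra hcard
  push_neg at hcard
  have hcard' : k + 2 ≤ S.card := hcard
  obtain ⟨t', ht'S, ht'card⟩ := Finset.exists_subset_card_eq hcard'
  set e : Fin (k + 2) → X := fun i => ↑(t'.equivFin.symm (Fin.cast ht'card.symm i)) with he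
  have heS : ∀ i, e i ∈ S := fun i => ht'S (t'.equivFin.symm _).2
  have heinj : Function.Injective e := by
    intro i j hij
    have := Subtype.coe_injective hij
    have := t'.equivFin.symm.injective this
    simpa [Fin.ext_iff] using this
  have heT : e ∈ T := by
    constructor
    · intro i j hij
      exact hsep _ (heS i) _ (heS j) (fun hc => hij (heinj hc))
    · intro i j
      rw [(hS (heS i)).1, (hS (heS j)).1]
  have h1 : ε ≤ h e := hεT e heT
  have h2 : h e ≤ 2 * (ε / 3) := by
    apply Finset.sup'_le
    intro p _
    have ha : dist (g (e p.1)) (g' (e p.1)) ≤ dist g g' :=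
      ContinuousMap.dist_apply_le_dist _
    have hb : dist (g' (e p.2)) (g (e p.2)) ≤ dist g' g :=
      ContinuousMap.dist_apply_le_dist _
    have hmid : g' (e p.1) = g' (e p.2) := by
      rw [(hS (heS p.1)).2, (hS (heS p.2)).2]
    have hgg' : dist g g' < ε / 3 := by
      rw [dist_comm]; exact mem_ball.mp hg'
    have hmid0 : dist (g' (e p.1)) (g' (e p.2)) = 0 := by rw [hmid, dist_self]
    have htri := dist_triangle4 (g (e p.1)) (g' (e p.1)) (g' (e p.2)) (g (e p.2))
    have hba : dist g' g = dist g g' := dist_comm _ _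
    linarith
  linarith
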